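/- arXiv:1408.4104 — 2 statements merged into one kernel-verified Lean document; each statement's English description precedes it below -/
import Mathlib

section
/- Let V be a real Hilbert space with norm ‖·‖, let a_h, a_h^+ : V × V → ℝ be bilinear forms satisfying a_h(v,v) ≥ α‖v‖², a_h^+(v,v) ≥ α‖v‖², |a_h(v,w)| ≤ M‖v‖‖w‖, |a_h^+(v,w)| ≤ M‖v‖‖w‖ for all v, w ∈ V, with α, M > 0. Let V_h and V_h^+ be subspaces of V, and for u ∈ V let r_h u ∈ V_h and r_h^+ u ∈ V_h^+ be the Galerkin projections, i.e. a_h(r_h u − u, w) = 0 for all w ∈ V_h and a_h^+(r_h^+ u − u, w) = 0 for all w ∈ V_h^+. Then for any e_h ∈ V_h and e_h^+ ∈ V_h^+: ‖r_h^+ u − r_h u‖ ≤ (M/α)‖r_h^+ u − r_h u − (e_h + e_h^+)‖ + (1/√α)(|a_h^+(r_h^+ u − u, e_h)|^{1/2} + |a_h(r_h u − u, e_h^+)|^{1/2} + |a_h^+(r_h u − u, e_h + e_h^+) − a_h(r_h u − u, e_h + e_h^+)|^{1/2}). -/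
set_option maxHeartbeats 800000


/-- Abstract supercloseness estimate (Theorem 2.1). -/
theorem stmt_5 {V : Type*} [NormedAddCommGroup V] [InnerProductSpace ℝ V]
    (ah ahp : V →ₗ[ℝ] V →ₗ[ℝ] ℝ) (α M : ℝ) (hα : 0 < α) (hM : 0 < M)
    (hcoer : ∀ v : V, α * ‖v‖ ^ 2 ≤ ah v v)
    (hcoerp : ∀ v : V, α * ‖v‖ ^ 2 ≤ ahp v v)
    (hbound : ∀ v w : V, |ah v w| ≤ M * ‖v‖ * ‖w‖)
    (hboundp : ∀ v w : V, |ahp v w| ≤ M * ‖v‖ * ‖w‖)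
    (Vh Vhp : Submodule ℝ V) (u rhu rhpu : V)
    (hrh : rhu ∈ Vh) (hrhp : rhpu ∈ Vhp)
    (horth : ∀ w ∈ Vh, ah (rhu - u) w = 0)
    (horthp : ∀ w ∈ Vhp, ahp (rhpu - u) w = 0)
    (eh ehp : V) (heh : eh ∈ Vh) (hehp : ehp ∈ Vhp) :
    ‖rhpu - rhu‖ ≤
      (M / α) * ‖rhpu - rhu - (eh + ehp)‖
        + (1 / Real.sqrt α) *
          (Real.sqrt |ahp (rhpu - u) eh| + Real.sqrt |ah (rhu - u) ehp|
            + Real.sqrt |ahp (rhu - u) (eh + ehp) - ah (rhu - u) (eh + ehp)|) := by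
  set d := rhpu - rhu with hd
  set e := eh + ehp with he
  have hA0 : ahp (rhpu - u) ehp = 0 := horthp _ hehp
  have hB0 : ah (rhu - u) eh = 0 := horth _ heh
  have h1 : ahp d (d - e) = ahp d d - ahp d e := map_sub _ _ _
  have h2 : ahp d e = ahp (rhpu - u) e - ahp (rhu - u) e := by
    have hde : d = (rhpu - u) - (rhu - u) := by rw [hd]; abel
    rw [hde, map_sub, LinearMap.sub_apply]
  have h3 : ahp (rhpu - u) e = ahp (rhpu - u) eh := by
    rw [he, map_add, hA0, add_zero]
  have h4 : ah (rhu - u) e = ah (rhu - u) ehp := by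
    rw [he, map_add, hB0, zero_add]
  -- main quadratic estimate
  have hquad : α * ‖d‖ ^ 2 ≤ M * ‖d‖ * ‖d - e‖ + |ahp (rhpu - u) eh|
      + |ah (rhu - u) ehp| + |ahp (rhu - u) e - ah (rhu - u) e| := by
    have hc := hcoerp d
    have hb := hboundp d (d - e)
    have l1 := le_abs_self (ahp d (d - e))
    have l2 := le_abs_self (ahp (rhpu - u) eh)
    have l3 := neg_abs_le (ah (rhu - u) ehp)
    have l4 := neg_abs_le (ahp (rhu - u) e - ah (rhu - u) e)
    linarith
  set x := ‖d‖ with hx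
  set y := ‖d - e‖ with hy
  set A := |ahp (rhpu - u) eh| with hA
  set B := |ah (rhu - u) ehp| with hB
  set C := |ahp (rhu - u) e - ah (rhu - u) e| with hC
  have hx0 : 0 ≤ x := norm_nonneg _
  have hy0 : 0 ≤ y := norm_nonneg _
  have hA0' : 0 ≤ A := abs_nonneg _
  have hB0' : 0 ≤ B := abs_nonneg _
  have hC0' : 0 ≤ C := abs_nonneg _
  set S := Real.sqrt A + Real.sqrt B + Real.sqrt C with hS
  have hS0 : 0 ≤ S := by positivity
  have hsum : A + B + C ≤ S ^ 2 := by
    have ha := Real.sq_sqrt hA0'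
    have hb := Real.sq_sqrt hB0'
    have hc := Real.sq_sqrt hC0'
    have hab : 0 ≤ Real.sqrt A * Real.sqrt B := by positivity
    have hac : 0 ≤ Real.sqrt A * Real.sqrt C := by positivity
    have hbc : 0 ≤ Real.sqrt B * Real.sqrt C := by positivity
    nlinarith
  have hq : α * x ^ 2 ≤ M * x * y + S ^ 2 := by linarith
  set sα := Real.sqrt α with hsα
  have hsα0 : 0 < sα := Real.sqrt_pos.mpr hα
  have hsα2 : sα * sα = α := Real.mul_self_sqrt hα.le
  -- conclude: α * x ≤ M * y + sα * S
  have hmain : α * x ≤ M * y + sα * S := by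
    by_cases hcase : sα * x ≤ S
    · have h5 : sα * (sα * x) ≤ sα * S := by
        exact mul_le_mul_of_nonneg_left hcase hsα0.le
      have h6 : 0 ≤ M * y := by positivity
      nlinarith
    · push_neg at hcase
      have hxpos : 0 < x := by nlinarith
      have h5 : S * S ≤ S * (sα * x) := by
        exact mul_le_mul_of_nonneg_left hcase.le hS0
      nlinarith
  have hfin : x ≤ (M * y + sα * S) / α := by
    rw [le_div_iff₀ hα]
    linarith [hmain]
  have heq : (M * y + sα * S) / α = M / α * y + 1 / sα * S := by
    rw [add_div, ← hsα2, mul_div_mul_left _ _ hsα0.ne']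
    ring
  linarith [hfin, heq.le, heq.ge]
end

section
/- Let h > 0 and let u : [0, 2h] → ℝ be the function u(x) = x^{2−1/p} − x with 2 < p < ∞. Let i_1 be the affine interpolant of u on the single interval [0, 2h] (agreeing with u at 0 and 2h), and let i_2 be the piecewise affine interpolant of u on the two intervals [0, 3h/2] and [3h/2, 2h]. Then there exists a constant C > 0 (depending on p but not on h) such that for all sufficiently small h, the L²(0,2h)-norm of i_1 − i_2 is at least C h^{5/2 − 1/p}. -/
open MeasureTheory

/-- The function `u(x) = x^{2-1/p} - x`. -/
noncomputable def uFun (p x : ℝ) : ℝ := x ^ (2 - 1 / p) - x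

/-- Affine interpolant of `u` on the single interval `[0, 2h]` (note `u 0 = 0`). -/
noncomputable def interpOne (p h x : ℝ) : ℝ := (uFun p (2 * h) / (2 * h)) * x

/-- Piecewise affine interpolant of `u` on `[0, 3h/2]` and `[3h/2, 2h]`. -/
noncomputable def interpTwo (p h x : ℝ) : ℝ :=
  if x ≤ 3 * h / 2 then (uFun p (3 * h / 2) / (3 * h / 2)) * x
  else uFun p (3 * h / 2) +
    ((uFun p (2 * h) - uFun p (3 * h / 2)) / (2 * h - 3 * h / 2)) * (x - 3 * h / 2)

/-- Lower bound `C h^{5/2 - 1/p}` on the `L²(0,2h)`-distance between the two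
interpolants, for all sufficiently small `h`. -/
theorem stmt_10 (p : ℝ) (hp : 2 < p) :
    ∃ C > (0 : ℝ), ∃ h₀ > (0 : ℝ), ∀ h : ℝ, 0 < h → h ≤ h₀ →
      ENNReal.ofReal (C * h ^ (5 / 2 - 1 / p)) ≤
        eLpNorm (fun x => interpOne p h x - interpTwo p h x) 2
          (volume.restrict (Set.Ioo (0 : ℝ) (2 * h))) := by
  have hp0 : (0:ℝ) < p := by linarith
  have hip : 1 / p < 1 / 2 := by
    rw [div_lt_div_iff₀ hp0 (by norm_num)]; linarith
  have hip0 : 0 < 1 / p := by positivity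
  set α : ℝ := 2 - 1 / p with hαdef
  have hα1 : 0 < α - 1 := by simp only [hαdef]; linarith
  set c : ℝ := (2:ℝ) ^ (α-1) - (3/2:ℝ) ^ (α-1) with hcdef
  have hc : 0 < c := sub_pos.2 (Real.rpow_lt_rpow (by norm_num) (by norm_num) hα1)
  refine ⟨c * Real.sqrt (9/8), by positivity, 1, one_pos, fun h hh _ => ?_⟩
  set b : ℝ := 3 * h / 2 with hbdef
  have hb : 0 < b := by positivity
  set K : ℝ := c * h ^ (α-1) with hKdef
  have hK : 0 < K := by positivity
  -- slope computation
  have uslope : ∀ t : ℝ, 0 < t → uFun p t / t = t ^ (α-1) - 1 := by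
    intro t ht
    have hts : t ^ (α-1) = t ^ α / t := by
      rw [Real.rpow_sub ht, Real.rpow_one]
    rw [uFun, sub_div, div_self ht.ne', hts, hαdef]
  have hKeq : uFun p (2*h) / (2*h) - uFun p b / b = K := by
    rw [uslope _ (by positivity), uslope _ hb, hbdef, hKdef, hcdef]
    have h1 : (2*h) ^ (α-1) = 2 ^ (α-1) * h ^ (α-1) :=
      Real.mul_rpow (by norm_num) hh.le
    have h2 : (3*h/2) ^ (α-1) = (3/2:ℝ) ^ (α-1) * h ^ (α-1) := by
      rw [show 3*h/2 = (3/2)*h by ring]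
      exact Real.mul_rpow (by norm_num) hh.le
    rw [h1, h2]; ring
  -- step 1: mono
  have mono : eLpNorm (fun x => interpOne p h x - interpTwo p h x) 2
      (volume.restrict (Set.Ioo (0:ℝ) b)) ≤
      eLpNorm (fun x => interpOne p h x - interpTwo p h x) 2
      (volume.restrict (Set.Ioo (0:ℝ) (2*h))) :=
    eLpNorm_mono_measure _ (Measure.restrict_mono (Set.Ioo_subset_Ioo le_rfl (by linarith)) le_rfl)
  -- step 2: congr
  have hcong : (fun x => interpOne p h x - interpTwo p h x)
      =ᶠ[ae (volume.restrict (Set.Ioo (0:ℝ) b))] fun x => K * x := by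
    refine (ae_restrict_iff' measurableSet_Ioo).2 (ae_of_all _ fun x hx => ?_)
    have hxb : x ≤ 3 * h / 2 := le_of_lt (by simpa [hbdef] using hx.2)
    simp only [interpOne, interpTwo, if_pos hxb]
    rw [← hKeq, hbdef]; ring_nf
  -- step 3: lower bound
  have key : ENNReal.ofReal (c * Real.sqrt (9/8) * h ^ (5/2 - 1/p)) ≤
      eLpNorm (fun x => K * x) 2 (volume.restrict (Set.Ioo (0:ℝ) b)) := by
    rw [eLpNorm_eq_lintegral_rpow_enorm_toReal (by norm_num) (by norm_num)]
    have htoReal : (2 : ENNReal).toReal = 2 := by norm_num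
    rw [htoReal]
    set r : ℝ := c * Real.sqrt (9/8) * h ^ (5/2 - 1/p) with hrdef
    have hr : 0 ≤ r := by positivity
    have hnn : ∀ y : ℝ, ((‖y‖₊ : ENNReal)) ^ (2:ℝ) = ENNReal.ofReal (y^2) := by
      intro y
      rw [← enorm_eq_nnnorm, ← ofReal_norm, ENNReal.ofReal_rpow_of_nonneg (norm_nonneg _) (by norm_num)]
      rw [Real.rpow_two, Real.norm_eq_abs, sq_abs]
    have hI : ENNReal.ofReal (r^2) ≤ ∫⁻ x in Set.Ioo (0:ℝ) b, (‖K * x‖₊ : ENNReal) ^ (2:ℝ) := by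
      have hint : IntegrableOn (fun x => (K*x)^2) (Set.Ioo (0:ℝ) b) := by
        apply (Continuous.integrableOn_Icc (by continuity)).mono_set Set.Ioo_subset_Icc_self
      calc ENNReal.ofReal (r^2) ≤ ENNReal.ofReal (∫ x in Set.Ioo (0:ℝ) b, (K*x)^2) := by
            apply ENNReal.ofReal_le_ofReal
            have hval : ∫ x in Set.Ioo (0:ℝ) b, (K*x)^2 = K^2 * (b^3/3) := by
              rw [← integral_Ioc_eq_integral_Ioo,
                ← intervalIntegral.integral_of_le hb.le]
              have : ∀ x : ℝ, (K*x)^2 = K^2 * x^2 := fun x => by ring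
              simp_rw [this]
              rw [intervalIntegral.integral_const_mul, integral_pow]
              norm_num
            rw [hval]
            -- r^2 = c^2 * (9/8) * h^(5 - 2/p) and K^2*b^3/3 = same
            have hsq : Real.sqrt (9/8) ^ 2 = 9/8 := Real.sq_sqrt (by norm_num)
            have hrpow : (h ^ (5/2 - 1/p))^2 = h ^ ((α-1)*2) * h^3 := by
              rw [← Real.rpow_natCast (h ^ (5/2-1/p)) 2, ← Real.rpow_natCast h 3,
                ← Real.rpow_mul hh.le, ← Real.rpow_add hh]
              congr 1
              simp only [hαdef]; push_cast; ring
            have hKpow : (h ^ (α-1))^2 = h ^ ((α-1)*2) := by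
              rw [← Real.rpow_natCast (h ^ (α-1)) 2, ← Real.rpow_mul hh.le]
              norm_num
            have : r^2 = K^2 * (b^3/3) := by
              rw [hrdef, hKdef, hbdef]
              rw [mul_pow, mul_pow, mul_pow, hsq, hrpow, hKpow]
              ring
            rw [this]
          _ = ∫⁻ x in Set.Ioo (0:ℝ) b, ENNReal.ofReal ((K*x)^2) := by
            apply ofReal_integral_eq_lintegral_ofReal hint
            exact ae_of_all _ fun x => sq_nonneg _
          _ = ∫⁻ x in Set.Ioo (0:ℝ) b, (‖K * x‖₊ : ENNReal) ^ (2:ℝ) := by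
            simp_rw [hnn]
    calc ENNReal.ofReal r = (ENNReal.ofReal (r^2)) ^ (1/2 : ℝ) := by
          rw [ENNReal.ofReal_rpow_of_nonneg (sq_nonneg r) (by norm_num)]
          congr 1
          rw [← Real.rpow_natCast r 2, ← Real.rpow_mul hr]
          norm_num
      _ ≤ (∫⁻ x in Set.Ioo (0:ℝ) b, (‖K * x‖₊ : ENNReal) ^ (2:ℝ)) ^ (1/2 : ℝ) :=
          ENNReal.rpow_le_rpow hI (by norm_num)
  calc ENNReal.ofReal (c * Real.sqrt (9/8) * h ^ (5/2 - 1/p))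
      ≤ eLpNorm (fun x => K * x) 2 (volume.restrict (Set.Ioo (0:ℝ) b)) := key
    _ = eLpNorm (fun x => interpOne p h x - interpTwo p h x) 2
        (volume.restrict (Set.Ioo (0:ℝ) b)) := (eLpNorm_congr_ae hcong).symm
    _ ≤ _ := mono
end
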